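/- arXiv:math/0404330 — 4 statements merged into one kernel-verified Lean document; each statement's English description precedes it below -/
import Mathlib

section
/- Let A, B be diagonal 2×2 complex matrices and let X, Y be invertible 2×2 complex matrices such that X*A*Y = diag(z₀, 1) and X*B*Y = diag(1, z₁) for some complex numbers z₀, z₁ with |z₀| < 1 and |z₁| < 1. If X₁₁ = 0 (i.e., the (1,1) entry of X vanishes) and A₁₁B₂₂ − A₂₂B₁₁ ≠ 0, then X and Y are both skew-diagonal, i.e., X₁₁ = X₂₂ = Y₁₁ = Y₂₂ = 0. -/
open Matrix

theorem skewDiagonal_case (A B X Y : Matrix (Fin 2) (Fin 2) ℂ) (z₀ z₁ : ℂ)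
    (hA : A 0 1 = 0 ∧ A 1 0 = 0) (hB : B 0 1 = 0 ∧ B 1 0 = 0)
    (hX : IsUnit X) (hY : IsUnit Y)
    (hz₀ : ‖z₀‖ < 1) (hz₁ : ‖z₁‖ < 1)
    (h1 : X * A * Y = !![z₀, 0; 0, 1]) (h2 : X * B * Y = !![1, 0; 0, z₁])
    (hX11 : X 0 0 = 0)
    (hdet : A 0 0 * B 1 1 - A 1 1 * B 0 0 ≠ 0) :
    X 0 0 = 0 ∧ X 1 1 = 0 ∧ Y 0 0 = 0 ∧ Y 1 1 = 0 := by
  obtain ⟨hA01, hA10⟩ := hA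
  obtain ⟨hB01, hB10⟩ := hB
  have e10 := congrFun (congrFun h1 1) 0
  have e11 := congrFun (congrFun h1 1) 1
  have f00 := congrFun (congrFun h2 0) 0
  have f01 := congrFun (congrFun h2 0) 1
  have f10 := congrFun (congrFun h2 1) 0
  simp [Matrix.mul_apply, Fin.sum_univ_two, hA01, hA10, hB01, hB10, hX11] at e10 e11 f00 f01 f10
  have hx01 : X 0 1 ≠ 0 := by
    intro h; rw [h] at f00; simp at f00
  have hb1 : B 1 1 ≠ 0 := by
    intro h; rw [h] at f00; simp at f00
  have hy10 : Y 1 0 ≠ 0 := by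
    intro h; rw [h] at f00; simp at f00
  have hy11 : Y 1 1 = 0 := by tauto
  have hx10 : X 1 0 ≠ 0 := by
    intro h; rw [h, hy11] at e11; simp at e11
  have key : Y 0 0 * (X 1 0 * (A 0 0 * B 1 1 - A 1 1 * B 0 0)) = 0 := by
    linear_combination B 1 1 * e10 - A 1 1 * f10
  have hy00 : Y 0 0 = 0 := by
    rcases mul_eq_zero.1 key with h | h
    · exact h
    · exact absurd h (mul_ne_zero hx10 hdet)
  have hx11 : X 1 1 = 0 := by
    have k2 : X 1 1 * (B 1 1 * Y 1 0) = 0 := by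
      linear_combination f10 - X 1 0 * B 0 0 * hy00
    rcases mul_eq_zero.1 k2 with h | h
    · exact h
    · exact absurd h (mul_ne_zero hb1 hy10)
  exact ⟨hX11, hx11, hy00, hy11⟩
end

section
/- Let A, B be diagonal 2×2 complex matrices and let X, Y be invertible 2×2 complex matrices such that X*A*Y = diag(z₀, 1) and X*B*Y = diag(1, z₁) for some complex numbers z₀, z₁ with |z₀| < 1 and |z₁| < 1. If X₁₁ ≠ 0 and A₁₁B₂₂ − A₂₂B₁₁ ≠ 0, then X and Y are both diagonal and moreover |A₁₁| < |B₁₁|, |A₂₂| > |B₂₂|, A₂₂·X₂₂·Y₂₂ = 1, and B₁₁·X₁₁·Y₁₁ = 1. -/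
open Matrix

theorem diagonal_case (A B X Y : Matrix (Fin 2) (Fin 2) ℂ) (z₀ z₁ : ℂ)
    (hA : A 0 1 = 0 ∧ A 1 0 = 0) (hB : B 0 1 = 0 ∧ B 1 0 = 0)
    (hX : IsUnit X) (hY : IsUnit Y)
    (hz₀ : ‖z₀‖ < 1) (hz₁ : ‖z₁‖ < 1)
    (h1 : X * A * Y = !![z₀, 0; 0, 1]) (h2 : X * B * Y = !![1, 0; 0, z₁])
    (hX11 : X 0 0 ≠ 0)
    (hdet : A 0 0 * B 1 1 - A 1 1 * B 0 0 ≠ 0) :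
    (X 0 1 = 0 ∧ X 1 0 = 0 ∧ Y 0 1 = 0 ∧ Y 1 0 = 0) ∧
    ‖A 0 0‖ < ‖B 0 0‖ ∧
    ‖A 1 1‖ > ‖B 1 1‖ ∧
    A 1 1 * X 1 1 * Y 1 1 = 1 ∧
    B 0 0 * X 0 0 * Y 0 0 = 1 := by
  have eA00 := congrFun (congrFun h1 0) 0
  have eA01 := congrFun (congrFun h1 0) 1
  have eA10 := congrFun (congrFun h1 1) 0
  have eA11 := congrFun (congrFun h1 1) 1
  have eB00 := congrFun (congrFun h2 0) 0
  have eB01 := congrFun (congrFun h2 0) 1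
  have eB10 := congrFun (congrFun h2 1) 0
  have eB11 := congrFun (congrFun h2 1) 1
  simp [Matrix.mul_apply, Fin.sum_univ_two, hA.1, hA.2, hB.1, hB.2] at eA00 eA01 eA10 eA11 eB00 eB01 eB10 eB11
  -- Eliminations
  have k1 : (A 0 0 * B 1 1 - A 1 1 * B 0 0) * (X 0 0 * Y 0 1) = 0 := by
    linear_combination B 1 1 * eA01 - A 1 1 * eB01
  have hY01 : Y 0 1 = 0 := by
    rcases mul_eq_zero.mp k1 with h | h
    · exact absurd h hdet
    · rcases mul_eq_zero.mp h with h | h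
      · exact absurd h hX11
      · exact h
  have k2 : (A 0 0 * B 1 1 - A 1 1 * B 0 0) * (X 0 1 * Y 1 1) = 0 := by
    linear_combination A 0 0 * eB01 - B 0 0 * eA01
  have k3 : (A 0 0 * B 1 1 - A 1 1 * B 0 0) * (X 1 0 * Y 0 0) = 0 := by
    linear_combination B 1 1 * eA10 - A 1 1 * eB10
  have k4 : (A 0 0 * B 1 1 - A 1 1 * B 0 0) * (X 1 1 * Y 1 0) = 0 := by
    linear_combination A 0 0 * eB10 - B 0 0 * eA10
  -- a₁ X₁₁ Y₁₁ = 1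
  have e1 : A 1 1 * X 1 1 * Y 1 1 = 1 := by
    linear_combination eA11 - X 1 0 * A 0 0 * hY01
  have hX22 : X 1 1 ≠ 0 := by
    intro h; rw [h] at e1; simp at e1
  have hY22 : Y 1 1 ≠ 0 := by
    intro h; rw [h] at e1; simp at e1
  have hA11 : A 1 1 ≠ 0 := by
    intro h; rw [h] at e1; simp at e1
  have hX01 : X 0 1 = 0 := by
    rcases mul_eq_zero.mp k2 with h | h
    · exact absurd h hdet
    · rcases mul_eq_zero.mp h with h | h
      · exact h
      · exact absurd h hY22
  have hY10 : Y 1 0 = 0 := by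
    rcases mul_eq_zero.mp k4 with h | h
    · exact absurd h hdet
    · rcases mul_eq_zero.mp h with h | h
      · exact absurd h hX22
      · exact h
  have hdY : Y.det ≠ 0 := by
    have := (Matrix.isUnit_iff_isUnit_det Y).mp hY
    exact isUnit_iff_ne_zero.mp this
  rw [Matrix.det_fin_two, hY01, hY10] at hdY
  simp at hdY
  have hY00 : Y 0 0 ≠ 0 := by
    intro h; rw [h] at hdY; simp at hdY
  have hX10 : X 1 0 = 0 := by
    rcases mul_eq_zero.mp k3 with h | h
    · exact absurd h hdet
    · rcases mul_eq_zero.mp h with h | h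
      · exact h
      · exact absurd h hY00
  -- b₀ X₀₀ Y₀₀ = 1
  have e2 : B 0 0 * X 0 0 * Y 0 0 = 1 := by
    linear_combination eB00 - X 0 1 * B 1 1 * hY10
  have hB00 : B 0 0 ≠ 0 := by
    intro h; rw [h] at e2; simp at e2
  -- a₀ = z₀ b₀
  have e3 : (A 0 0 - z₀ * B 0 0) * (X 0 0 * Y 0 0) = 0 := by
    linear_combination eA00 - z₀ * eB00 + (z₀ * B 1 1 - A 1 1) * Y 1 0 * hX01
  have e4 : A 0 0 = z₀ * B 0 0 := by
    rcases mul_eq_zero.mp e3 with h | h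
    · exact sub_eq_zero.mp h
    · rcases mul_eq_zero.mp h with h | h
      · exact absurd h hX11
      · exact absurd h hY00
  -- b₁ = z₁ a₁
  have e5 : (B 1 1 - z₁ * A 1 1) * (X 1 1 * Y 1 1) = 0 := by
    linear_combination eB11 - z₁ * eA11 + (z₁ * A 0 0 - B 0 0) * X 1 0 * hY01
  have e6 : B 1 1 = z₁ * A 1 1 := by
    rcases mul_eq_zero.mp e5 with h | h
    · exact sub_eq_zero.mp h
    · rcases mul_eq_zero.mp h with h | h
      · exact absurd h hX22
      · exact absurd h hY22
  refine ⟨⟨hX01, hX10, hY01, hY10⟩, ?_, ?_, e1, e2⟩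
  · rw [e4, norm_mul]
    have hb : 0 < ‖B 0 0‖ := by
      simpa using (norm_pos_iff.mpr hB00)
    calc ‖z₀‖ * ‖B 0 0‖ < 1 * ‖B 0 0‖ :=
          mul_lt_mul_of_pos_right hz₀ hb
      _ = ‖B 0 0‖ := one_mul _
  · rw [e6, norm_mul]
    have ha : 0 < ‖A 1 1‖ := by
      simpa using (norm_pos_iff.mpr hA11)
    calc ‖z₁‖ * ‖A 1 1‖ < 1 * ‖A 1 1‖ :=
          mul_lt_mul_of_pos_right hz₁ ha
      _ = ‖A 1 1‖ := one_mul _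
end

section
/- Let A, B be diagonal 2×2 complex matrices whose diagonal entries are proportional, i.e., A₁₁·B₂₂ = A₂₂·B₁₁ with A₂₂ ≠ 0 and B₂₂ ≠ 0. Then there exist no invertible 2×2 complex matrices X, Y and complex numbers z₀, z₁ with |z₀| < 1, |z₁| < 1 such that X*A*Y = diag(z₀, 1) and X*B*Y = diag(1, z₁). -/
open Matrix

theorem proportional_contradiction (A B : Matrix (Fin 2) (Fin 2) ℂ)
    (hA : A 0 1 = 0 ∧ A 1 0 = 0) (hB : B 0 1 = 0 ∧ B 1 0 = 0)
    (hprop : A 0 0 * B 1 1 = A 1 1 * B 0 0)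
    (hA22 : A 1 1 ≠ 0) (hB22 : B 1 1 ≠ 0) :
    ¬ ∃ (X Y : Matrix (Fin 2) (Fin 2) ℂ) (z₀ z₁ : ℂ),
      IsUnit X ∧ IsUnit Y ∧ ‖z₀‖ < 1 ∧ ‖z₁‖ < 1 ∧
      X * A * Y = !![z₀, 0; 0, 1] ∧ X * B * Y = !![1, 0; 0, z₁] := by
  rintro ⟨X, Y, z₀, z₁, hX, hY, h0, h1, hXA, hXB⟩
  set c := B 1 1 / A 1 1 with hc
  have hBc : B = c • A := by
    ext i j
    fin_cases i <;> fin_cases j <;>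
      simp only [Matrix.smul_apply, smul_eq_mul, hc, Fin.zero_eta, Fin.mk_one]
    · field_simp
      linear_combination -hprop
    · simp [hA.1, hB.1]
    · simp [hA.2, hB.2]
    · field_simp
  have key : (!![1, 0; 0, z₁] : Matrix (Fin 2) (Fin 2) ℂ) = c • !![z₀, 0; 0, 1] := by
    rw [← hXB, ← hXA, hBc, Matrix.mul_smul, Matrix.smul_mul]
  have e00 : (1 : ℂ) = c * z₀ := by
    have := congrFun (congrFun key 0) 0
    simpa using this
  have e11 : z₁ = c := by
    have := congrFun (congrFun key 1) 1
    simpa using this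
  have hz : z₀ * z₁ = 1 := by rw [e11, mul_comm]; exact e00.symm
  have : ‖z₀‖ * ‖z₁‖ = 1 := by
    rw [← norm_mul, hz, norm_one]
  nlinarith [norm_nonneg z₀, norm_nonneg z₁]
end

section
/- Let A, B be diagonal 2×2 complex matrices and let X, Y be invertible 2×2 complex matrices such that X*A*Y = diag(1, z₀) and X*B*Y = diag(z₁, 1) for some complex numbers z₀, z₁ with |z₀| < 1 and |z₁| < 1, and suppose A₁₁B₂₂ − A₂₂B₁₁ ≠ 0. Then either X and Y are both diagonal with |A₁₁| > |B₁₁|, |A₂₂| < |B₂₂|, A₁₁X₁₁Y₁₁ = 1, B₂₂X₂₂Y₂₂ = 1, or X and Y are both skew-diagonal with |A₁₁| < |B₁₁|, |A₂₂| > |B₂₂|, A₂₂X₁₂Y₂₁ = 1, B₁₁X₂₁Y₁₂ = 1. -/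
open Matrix

lemma abs_lt_of_ratio {a b z : ℂ} (t : ℂ) (ha : a * t = 1) (hb : b * t = z)
    (hz : ‖z‖ < 1) : ‖b‖ < ‖a‖ := by
  have ha0 : a ≠ 0 := by rintro rfl; simp at ha
  have hba : b = z * a := by linear_combination a * hb - b * ha
  rw [hba, norm_mul]
  have hpos : 0 < ‖a‖ := norm_pos_iff.mpr ha0
  exact (mul_lt_iff_lt_one_left hpos).mpr hz

theorem case_ii_dichotomy (A B X Y : Matrix (Fin 2) (Fin 2) ℂ) (z₀ z₁ : ℂ)
    (hA : A 0 1 = 0 ∧ A 1 0 = 0) (hB : B 0 1 = 0 ∧ B 1 0 = 0)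
    (hX : IsUnit X) (hY : IsUnit Y)
    (hz₀ : ‖z₀‖ < 1) (hz₁ : ‖z₁‖ < 1)
    (h1 : X * A * Y = !![1, 0; 0, z₀]) (h2 : X * B * Y = !![z₁, 0; 0, 1])
    (hdet : A 0 0 * B 1 1 - A 1 1 * B 0 0 ≠ 0) :
    ((X 0 1 = 0 ∧ X 1 0 = 0 ∧ Y 0 1 = 0 ∧ Y 1 0 = 0) ∧
      ‖(A 0 0)‖ > ‖(B 0 0)‖ ∧
      ‖(A 1 1)‖ < ‖(B 1 1)‖ ∧
      A 0 0 * X 0 0 * Y 0 0 = 1 ∧ B 1 1 * X 1 1 * Y 1 1 = 1) ∨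
    ((X 0 0 = 0 ∧ X 1 1 = 0 ∧ Y 0 0 = 0 ∧ Y 1 1 = 0) ∧
      ‖(A 0 0)‖ < ‖(B 0 0)‖ ∧
      ‖(A 1 1)‖ > ‖(B 1 1)‖ ∧
      A 1 1 * X 0 1 * Y 1 0 = 1 ∧ B 0 0 * X 1 0 * Y 0 1 = 1) := by
  obtain ⟨hA1, hA2⟩ := hA
  obtain ⟨hB1, hB2⟩ := hB
  have hdX : X.det ≠ 0 := by
    rw [← isUnit_iff_ne_zero, ← Matrix.isUnit_iff_isUnit_det]; exact hX
  have hdY : Y.det ≠ 0 := by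
    rw [← isUnit_iff_ne_zero, ← Matrix.isUnit_iff_isUnit_det]; exact hY
  rw [Matrix.det_fin_two] at hdX hdY
  have e1 := congr_fun (congr_fun h1 0) 0
  have e2 := congr_fun (congr_fun h1 0) 1
  have e3 := congr_fun (congr_fun h1 1) 0
  have e4 := congr_fun (congr_fun h1 1) 1
  have e5 := congr_fun (congr_fun h2 0) 0
  have e6 := congr_fun (congr_fun h2 0) 1
  have e7 := congr_fun (congr_fun h2 1) 0
  have e8 := congr_fun (congr_fun h2 1) 1
  simp [Matrix.mul_apply, Fin.sum_univ_two, hA1, hA2, hB1, hB2] at e1 e2 e3 e4 e5 e6 e7 e8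
  have k1 : X 0 0 * Y 0 1 = 0 := by
    apply mul_left_cancel₀ hdet; linear_combination B 1 1 * e2 - A 1 1 * e6
  have k2 : X 0 1 * Y 1 1 = 0 := by
    apply mul_left_cancel₀ hdet; linear_combination A 0 0 * e6 - B 0 0 * e2
  have k3 : X 1 0 * Y 0 0 = 0 := by
    apply mul_left_cancel₀ hdet; linear_combination B 1 1 * e3 - A 1 1 * e7
  have k4 : X 1 1 * Y 1 0 = 0 := by
    apply mul_left_cancel₀ hdet; linear_combination A 0 0 * e7 - B 0 0 * e3
  by_cases hx1 : X 0 0 = 0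
  · -- skew-diagonal case
    right
    have hx2 : X 0 1 ≠ 0 := by intro h; apply hdX; rw [hx1, h]; ring
    have hx3 : X 1 0 ≠ 0 := by intro h; apply hdX; rw [hx1, h]; ring
    have hy4 : Y 1 1 = 0 := by
      rcases mul_eq_zero.mp k2 with h | h; exact absurd h hx2; exact h
    have hy1 : Y 0 0 = 0 := by
      rcases mul_eq_zero.mp k3 with h | h; exact absurd h hx3; exact h
    have hy3 : Y 1 0 ≠ 0 := by intro h; apply hdY; rw [hy4, h]; ring
    have hx4 : X 1 1 = 0 := by
      rcases mul_eq_zero.mp k4 with h | h; exact h; exact absurd h hy3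
    have q1 : A 1 1 * (X 0 1 * Y 1 0) = 1 := by rw [hx1] at e1; linear_combination e1
    have q2 : B 0 0 * (X 1 0 * Y 0 1) = 1 := by rw [hx4] at e8; linear_combination e8
    have q3 : A 0 0 * (X 1 0 * Y 0 1) = z₀ := by rw [hx4] at e4; linear_combination e4
    have q4 : B 1 1 * (X 0 1 * Y 1 0) = z₁ := by rw [hx1] at e5; linear_combination e5
    exact ⟨⟨hx1, hx4, hy1, hy4⟩, abs_lt_of_ratio _ q2 q3 hz₀,
      abs_lt_of_ratio _ q1 q4 hz₁, by linear_combination q1, by linear_combination q2⟩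
  · -- diagonal case
    left
    have hy2 : Y 0 1 = 0 := by
      rcases mul_eq_zero.mp k1 with h | h; exact absurd h hx1; exact h
    have hy1 : Y 0 0 ≠ 0 := by intro h; apply hdY; rw [hy2, h]; ring
    have hy4 : Y 1 1 ≠ 0 := by intro h; apply hdY; rw [hy2, h]; ring
    have hx3 : X 1 0 = 0 := by
      rcases mul_eq_zero.mp k3 with h | h; exact h; exact absurd h hy1
    have hx2 : X 0 1 = 0 := by
      rcases mul_eq_zero.mp k2 with h | h; exact h; exact absurd h hy4
    have hx4 : X 1 1 ≠ 0 := by intro h; apply hdX; rw [hx2, h]; ring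
    have hy3 : Y 1 0 = 0 := by
      rcases mul_eq_zero.mp k4 with h | h; exact absurd h hx4; exact h
    have q1 : A 0 0 * (X 0 0 * Y 0 0) = 1 := by rw [hx2] at e1; linear_combination e1
    have q2 : B 1 1 * (X 1 1 * Y 1 1) = 1 := by rw [hx3] at e8; linear_combination e8
    have q3 : A 1 1 * (X 1 1 * Y 1 1) = z₀ := by rw [hx3] at e4; linear_combination e4
    have q4 : B 0 0 * (X 0 0 * Y 0 0) = z₁ := by rw [hx2] at e5; linear_combination e5
    exact ⟨⟨hx2, hx3, hy2, hy3⟩, abs_lt_of_ratio _ q1 q4 hz₁,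
      abs_lt_of_ratio _ q2 q3 hz₀, by linear_combination q1, by linear_combination q2⟩
end
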